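/- For every integer k ≥ 4, there exists a tree T with k² vertices such that for every partition of the vertices of T into k sets of size k each, and every choice of tree structures on the parts, some part's tree contains an edge joining two vertices whose distance in T is at least 3. -/

import Mathlib

namespace BPLB

/-! Generic graph lemmas -/

lemma reach_invariant {V : Type*} {G : SimpleGraph V} (Q : V → Prop)
    (h : ∀ a b, G.Adj a b → (Q a ↔ Q b)) {u v : V} (hr : G.Reachable u v) : Q u ↔ Q v := by
  obtain ⟨p⟩ := hr
  induction p with
  | nil => rfl
  | cons ha _ ih => exact (h _ _ ha).trans ih

lemma walk_bound {V : Type*} {G : SimpleGraph V} (f : V → ℤ)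
    (hf : ∀ a b, G.Adj a b → f a - f b ≤ 1) :
    ∀ {u v : V} (p : G.Walk u v), f u - f v ≤ p.length := by
  intro u v p
  induction p with
  | nil => simp
  | cons ha _ ih =>
    have h1 := hf _ _ ha
    rw [SimpleGraph.Walk.length_cons]
    push_cast
    linarith

lemma dist_bound {V : Type*} {G : SimpleGraph V} (f : V → ℤ)
    (hf : ∀ a b, G.Adj a b → f a - f b ≤ 1) {u v : V} (hr : G.Reachable u v) :
    f u - f v ≤ (G.dist u v : ℤ) := by
  obtain ⟨p, hp⟩ := hr.exists_walk_length_eq_dist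
  rw [← hp]
  exact walk_bound f hf p

lemma exists_boundary {V : Type*} {G : SimpleGraph V} (Q : V → Prop) :
    ∀ {u v : V}, G.Walk u v → Q u → ¬ Q v → ∃ a b, G.Adj a b ∧ Q a ∧ ¬ Q b := by
  intro u v p
  induction p with
  | nil => intro h1 h2; exact absurd h1 h2
  | @cons u w v ha q ih =>
    intro h1 h2
    by_cases hw : Q w
    · exact ih hw h2
    · exact ⟨u, w, ha, h1, hw⟩

/-! The spider graph -/

def par (k x : ℕ) : ℕ := if (k-1) ∣ (x-1) then 0 else x - 1

def legOf (k x : ℕ) : ℕ := (x-1) / (k-1)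

def dep (k x : ℕ) : ℕ := (x-1) % (k-1) + 1

def spider (k : ℕ) : SimpleGraph (Fin (k^2)) :=
  SimpleGraph.fromRel (fun a b => (a:ℕ) ≠ 0 ∧ par k a = b)

lemma spider_adj {k : ℕ} (a b : Fin (k^2)) :
    (spider k).Adj a b ↔ a ≠ b ∧
      (((a:ℕ) ≠ 0 ∧ par k a = b) ∨ ((b:ℕ) ≠ 0 ∧ par k b = a)) := by
  simp [spider, SimpleGraph.fromRel_adj]

lemma par_le (k x : ℕ) : par k x ≤ x := by unfold par; split <;> omega

lemma par_lt (k x : ℕ) (hx : x ≠ 0) : par k x < x := by unfold par; split <;> omega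

lemma iter_par_le (k : ℕ) : ∀ (m x : ℕ), (par k)^[m] x ≤ x := by
  intro m
  induction m with
  | zero => simp
  | succ m ih =>
    intro x
    rw [Function.iterate_succ_apply']
    exact le_trans (par_le _ _) (ih x)

lemma div_mod_char (d q r : ℕ) (hr : r < d) : (q*d + r)/d = q ∧ (q*d + r) % d = r := by
  rw [add_comm]
  constructor
  · rw [Nat.add_mul_div_right _ _ (by omega : 0 < d), Nat.div_eq_of_lt hr]; omega
  · rw [Nat.add_mul_mod_self_right, Nat.mod_eq_of_lt hr]

lemma legdep {k x : ℕ} (h2 : 2 ≤ k) (hx : x ≠ 0) :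
    x = 1 + (legOf k x)*(k-1) + (dep k x - 1) ∧ 1 ≤ dep k x ∧ dep k x ≤ k-1 := by
  have hd : 0 < k - 1 := by omega
  have h1 := Nat.mod_add_div' (x-1) (k-1)
  have h2' := Nat.mod_lt (x-1) hd
  unfold legOf dep
  omega

lemma legOf_le {k x : ℕ} (h2 : 2 ≤ k) (hx : x ≠ 0) (hlt : x < k^2) : legOf k x ≤ k := by
  have hd : 0 < k - 1 := by omega
  have e : k^2 = (k+1)*(k-1) + 1 := by
    obtain ⟨n, rfl⟩ : ∃ n, k = n + 1 := ⟨k-1, by omega⟩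
    simp only [Nat.succ_sub_one]
    ring
  have : (x-1) / (k-1) < k + 1 := by
    rw [Nat.div_lt_iff_lt_mul hd]
    omega
  unfold legOf
  omega

lemma par_cases {k x : ℕ} (h2 : 2 ≤ k) (hx : x ≠ 0) :
    (dep k x = 1 ∧ par k x = 0) ∨
    (2 ≤ dep k x ∧ par k x = x - 1 ∧ x - 1 ≠ 0 ∧ legOf k (x-1) = legOf k x ∧
      dep k (x-1) = dep k x - 1) := by
  have hd : 0 < k - 1 := by omega
  by_cases hdvd : (k-1) ∣ (x-1)
  · left
    have hm : (x-1) % (k-1) = 0 := Nat.dvd_iff_mod_eq_zero.mp hdvd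
    constructor
    · unfold dep; omega
    · unfold par; rw [if_pos hdvd]
  · right
    have hm : (x-1) % (k-1) ≠ 0 := fun h => hdvd (Nat.dvd_iff_mod_eq_zero.mpr h)
    set q := (x-1)/(k-1) with hq
    set r := (x-1) % (k-1) with hr
    have h1 : r + q * (k-1) = x - 1 := Nat.mod_add_div' (x-1) (k-1)
    have hrlt : r < k - 1 := Nat.mod_lt _ hd
    have hx1 : x - 1 ≠ 0 := by
      intro h; rw [h] at hr; simp [Nat.zero_mod] at hr; omega
    have hpar : par k x = x - 1 := by unfold par; rw [if_neg hdvd]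
    have hsub : x - 1 - 1 = q * (k-1) + (r-1) := by omega
    have hchar := div_mod_char (k-1) q (r-1) (by omega)
    refine ⟨by unfold dep; omega, hpar, hx1, ?_, ?_⟩
    · show (x - 1 - 1) / (k-1) = legOf k x
      rw [hsub, hchar.1]; rfl
    · show (x - 1 - 1) % (k-1) + 1 = dep k x - 1
      rw [hsub, hchar.2]
      unfold dep
      omega


lemma spider_reach (k : ℕ) (hn : 0 < k^2) :
    ∀ (m : ℕ) (x : Fin (k^2)), (x:ℕ) ≤ m → (spider k).Reachable x ⟨0, hn⟩ := by
  intro m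
  induction m with
  | zero =>
    intro x hx
    have : x = ⟨0, hn⟩ := Fin.ext (by simp only [Fin.val_mk]; omega)
    rw [this]
  | succ m ih =>
    intro x hx
    by_cases h0 : (x:ℕ) = 0
    · have : x = ⟨0, hn⟩ := Fin.ext (by simp only [Fin.val_mk]; omega)
      rw [this]
    · have hlt : par k ↑x < ↑x := par_lt _ _ h0
      have hb : par k ↑x < k^2 := lt_trans hlt x.isLt
      have hadj : (spider k).Adj x ⟨par k ↑x, hb⟩ := by
        rw [spider_adj]
        exact ⟨by simp only [ne_eq, Fin.ext_iff]; omega, Or.inl ⟨h0, rfl⟩⟩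
      exact hadj.reachable.trans (ih ⟨par k ↑x, hb⟩ (by simp only [Fin.val_mk]; omega))

lemma spider_connected (k : ℕ) (hk : 1 ≤ k) : (spider k).Connected := by
  have hn : 0 < k^2 := by positivity
  haveI : Nonempty (Fin (k^2)) := ⟨⟨0, hn⟩⟩
  refine SimpleGraph.Connected.mk fun x y => ?_
  exact (spider_reach k hn ↑x x le_rfl).trans (spider_reach k hn ↑y y le_rfl).symm

lemma spider_bridge_aux (k : ℕ) (v w : Fin (k^2)) (h0 : (v:ℕ) ≠ 0) (hp : par k ↑v = ↑w) :
    ¬ ((spider k) \ SimpleGraph.fromEdgeSet {s(v,w)}).Reachable v w := by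
  intro hr
  set Q : Fin (k^2) → Prop := fun x => ∃ m, (par k)^[m] (x:ℕ) = (v:ℕ) with hQ
  have horient : ∀ a b : Fin (k^2), s(a,b) ≠ s(v,w) → (a:ℕ) ≠ 0 → par k ↑a = ↑b →
      (Q a ↔ Q b) := by
    intro a b hne ha0 hab
    have hav : a ≠ v := by
      intro h
      subst h
      have : b = w := Fin.ext (by rw [← hab, hp])
      exact hne (by rw [this])
    have havv : (a:ℕ) ≠ (v:ℕ) := fun h => hav (Fin.ext h)
    constructor
    · rintro ⟨m, hm⟩
      cases m with
      | zero => simp at hm; exact absurd hm havv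
      | succ m =>
        rw [Function.iterate_succ_apply, hab] at hm
        exact ⟨m, hm⟩
    · rintro ⟨m, hm⟩
      exact ⟨m+1, by rw [Function.iterate_succ_apply, hab]; exact hm⟩
  have key : ∀ a b, ((spider k) \ SimpleGraph.fromEdgeSet {s(v,w)}).Adj a b → (Q a ↔ Q b) := by
    intro a b hab
    rw [SimpleGraph.sdiff_adj] at hab
    obtain ⟨hG, hE⟩ := hab
    have hne : s(a,b) ≠ s(v,w) := by
      intro h
      exact hE (by rw [SimpleGraph.fromEdgeSet_adj]; exact ⟨by simp [h], hG.ne⟩)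
    rw [spider_adj] at hG
    rcases hG.2 with h | h
    · exact horient a b hne h.1 h.2
    · exact (horient b a (by rwa [Sym2.eq_swap] at hne) h.1 h.2).symm
  have hiff := reach_invariant Q key hr
  have hQv : Q v := ⟨0, rfl⟩
  have hQw : ¬ Q w := by
    rintro ⟨m, hm⟩
    have h1 : (par k)^[m] (w:ℕ) ≤ (w:ℕ) := iter_par_le k m _
    have h2 : (w:ℕ) < (v:ℕ) := by rw [← hp]; exact par_lt _ _ h0
    omega
  exact hQw (hiff.mp hQv)

lemma spider_isTree (k : ℕ) (hk : 1 ≤ k) : (spider k).IsTree := by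
  constructor
  · exact spider_connected k hk
  · rw [SimpleGraph.isAcyclic_iff_forall_adj_isBridge]
    intro v w hvw
    rw [SimpleGraph.isBridge_iff]
    change ¬ ((spider k) \ SimpleGraph.fromEdgeSet {s(v,w)}).Reachable v w
    rw [spider_adj] at hvw
    rcases hvw.2 with h | h
    · exact spider_bridge_aux k v w h.1 h.2
    · intro hr
      refine spider_bridge_aux k w v h.1 h.2 ?_
      have he : s(w,v) = s(v,w) := Sym2.eq_swap
      rw [he]
      exact hr.symm

lemma spider_dist3 {k : ℕ} (hk : 4 ≤ k) (a b : Fin (k^2)) (ha : (a:ℕ) ≠ 0) (hb : (b:ℕ) ≠ 0)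
    (hleg : legOf k ↑a ≠ legOf k ↑b) (hd : (spider k).dist a b ≤ 2) :
    dep k ↑a = 1 ∧ dep k ↑b = 1 := by
  have h2 : 2 ≤ k := by omega
  have hf : ∀ _ : Unit, True := fun _ => trivial
  let f : Fin (k^2) → ℤ := fun x =>
    if (x:ℕ) = 0 then 0
    else if legOf k ↑x = legOf k ↑a then (dep k ↑x : ℤ)
    else if legOf k ↑x = legOf k ↑b then -(dep k ↑x : ℤ) else 0
  have horient : ∀ u v : Fin (k^2), (u:ℕ) ≠ 0 → par k ↑u = ↑v →
      f u - f v ≤ 1 ∧ f v - f u ≤ 1 := by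
    intro u v hu0 huv
    rcases par_cases h2 hu0 with ⟨hd1, hp0⟩ | ⟨hd2, hp, hne0, hlegeq, hdepeq⟩
    · have hv0 : (v:ℕ) = 0 := by rw [← huv, hp0]
      have hfv : f v = 0 := by simp only [f, if_pos hv0]
      have hfu : f u = 1 ∨ f u = -1 ∨ f u = 0 := by
        simp only [f, if_neg hu0]
        split_ifs <;> simp [hd1]
      rw [hfv]
      rcases hfu with h | h | h <;> rw [h] <;> norm_num
    · have hv : (v:ℕ) = ↑u - 1 := by omega
      have hv0 : (v:ℕ) ≠ 0 := by omega
      have hlegv : legOf k ↑v = legOf k ↑u := by rw [hv]; exact hlegeq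
      have hdepv : dep k ↑v = dep k ↑u - 1 := by rw [hv]; exact hdepeq
      have hdep1 : 1 ≤ dep k ↑u := (legdep h2 hu0).2.1
      simp only [f, if_neg hu0, if_neg hv0, hlegv, hdepv]
      split_ifs <;> constructor <;> omega
  have hlip : ∀ u v : Fin (k^2), (spider k).Adj u v → f u - f v ≤ 1 := by
    intro u v huv
    rw [spider_adj] at huv
    rcases huv.2 with h | h
    · exact (horient u v h.1 h.2).1
    · exact (horient v u h.1 h.2).2
  have hreach : (spider k).Reachable a b := (spider_connected k (by omega)).preconnected a b
  have hbd := dist_bound f hlip hreach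
  have hfa : f a = (dep k ↑a : ℤ) := by simp only [f, if_neg ha, if_pos rfl, if_true]
  have hfb : f b = -(dep k ↑b : ℤ) := by
    simp only [f, if_neg hb, if_neg (Ne.symm hleg), if_pos rfl, if_true]
  have hda : 1 ≤ dep k ↑a := (legdep h2 ha).2.1
  have hdb : 1 ≤ dep k ↑b := (legdep h2 hb).2.1
  rw [hfa, hfb] at hbd
  have hcast : ((spider k).dist a b : ℤ) ≤ 2 := by exact_mod_cast hd
  omega

end BPLB

/-- For every `k ≥ 4` there is a tree on `k²` vertices such that for every
partition of its vertices into `k` sets of size `k` and every choice of tree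
structures on the parts, some part's tree has an edge joining two vertices at
distance at least `3` in the tree. -/
theorem balanced_partition_lower_bound_three (k : ℕ) (hk : 4 ≤ k) :
    ∃ G : SimpleGraph (Fin (k ^ 2)), G.IsTree ∧
      ∀ P : Fin k → Finset (Fin (k ^ 2)),
        (∀ i j, i ≠ j → Disjoint (P i) (P j)) →
        Finset.univ.biUnion P = Finset.univ →
        (∀ i, (P i).card = k) →
        ∀ H : (i : Fin k) → SimpleGraph {x // x ∈ P i},
          (∀ i, (H i).IsTree) →
          ∃ (i : Fin k) (u v : {x // x ∈ P i}),
            (H i).Adj u v ∧ 3 ≤ G.dist u.1 v.1 := by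
  classical
  refine ⟨BPLB.spider k, BPLB.spider_isTree k (by omega), ?_⟩
  intro P hdisj hcover hcard H hH
  by_contra hcon
  push_neg at hcon
  have hn : 0 < k^2 := by positivity
  have h2k : 2 ≤ k := by omega
  set z : Fin (k^2) := ⟨0, hn⟩ with hz
  have hzval : (z:ℕ) = 0 := rfl
  -- partition machinery
  have hmem : ∀ x : Fin (k^2), ∃ i, x ∈ P i := by
    intro x
    have hx : x ∈ Finset.univ.biUnion P := by rw [hcover]; exact Finset.mem_univ x
    obtain ⟨i, _, hi⟩ := Finset.mem_biUnion.mp hx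
    exact ⟨i, hi⟩
  choose idx hidx using hmem
  have huniq : ∀ x i, x ∈ P i → idx x = i := by
    intro x i hxi
    by_contra hne
    exact Finset.disjoint_left.mp (hdisj _ _ hne) (hidx x) hxi
  set i₀ := idx z with hi₀
  -- legs
  set LegF : ℕ → Finset (Fin (k^2)) :=
    fun t => Finset.univ.filter (fun v => (v:ℕ) ≠ 0 ∧ BPLB.legOf k ↑v = t) with hLegF
  have hmemLegF : ∀ (t : ℕ) (v : Fin (k^2)),
      v ∈ LegF t ↔ ((v:ℕ) ≠ 0 ∧ BPLB.legOf k ↑v = t) := by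
    intro t v; simp [hLegF]
  have hdisjLegF : ∀ s t : ℕ, s ≠ t → Disjoint (LegF s) (LegF t) := by
    intro s t hst
    rw [Finset.disjoint_left]
    intro a has hat
    exact hst (((hmemLegF s a).mp has).2 ▸ ((hmemLegF t a).mp hat).2 ▸ rfl)
  have hsq : k^2 = (k+1)*(k-1) + 1 := by
    obtain ⟨n, rfl⟩ : ∃ n, k = n + 1 := ⟨k-1, by omega⟩
    simp only [Nat.succ_sub_one]; ring
  have haleglt : ∀ t : ℕ, t ≤ k → 1 + t*(k-1) < k^2 := by
    intro t ht
    have h1 : t*(k-1) ≤ k*(k-1) := Nat.mul_le_mul_right _ ht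
    have h2 : k*(k-1) < (k+1)*(k-1) :=
      (Nat.mul_lt_mul_right (show 0 < k-1 by omega)).mpr (by omega)
    omega
  set aleg : ℕ → Fin (k^2) :=
    fun t => if h : t ≤ k then ⟨1 + t*(k-1), haleglt t h⟩ else z with haleg
  have haleg_val : ∀ t, t ≤ k → (aleg t : ℕ) = 1 + t*(k-1) := by
    intro t ht
    simp only [haleg, dif_pos ht]
  have haleg_leg : ∀ t, t ≤ k →
      (aleg t : ℕ) ≠ 0 ∧ BPLB.legOf k ↑(aleg t) = t := by
    intro t ht
    have hv := haleg_val t ht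
    have hchar := BPLB.div_mod_char (k-1) t 0 (by omega)
    refine ⟨by omega, ?_⟩
    show ((aleg t : ℕ) - 1) / (k-1) = t
    have he : (aleg t : ℕ) - 1 = t*(k-1) + 0 := by omega
    rw [he, hchar.1]
  have haleg_mem : ∀ t, t ≤ k → aleg t ∈ LegF t := by
    intro t ht
    exact (hmemLegF t _).mpr ⟨(haleg_leg t ht).1, (haleg_leg t ht).2⟩
  -- reconstruction: x with legOf = t, dep = 1 is aleg t
  have hrecon : ∀ (x : Fin (k^2)) (t : ℕ), t ≤ k → (x:ℕ) ≠ 0 →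
      BPLB.legOf k ↑x = t → BPLB.dep k ↑x = 1 → x = aleg t := by
    intro x t ht hx0 hleg hdep
    apply Fin.ext
    rw [haleg_val t ht]
    have hld := (BPLB.legdep h2k hx0).1
    rw [hleg, hdep] at hld
    omega
  -- card of legs
  have card_LegF : ∀ t : ℕ, t ≤ k → (LegF t).card = k - 1 := by
    intro t ht
    have hlt : ∀ j : ℕ, j ∈ Finset.range (k-1) → 1 + t*(k-1) + j < k^2 := by
      intro j hj
      rw [Finset.mem_range] at hj
      have h1 : t*(k-1) ≤ k*(k-1) := Nat.mul_le_mul_right _ ht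
      have h2 : (k+1)*(k-1) = k*(k-1) + (k-1) := by ring
      omega
    have hcb : (LegF t).card = (Finset.range (k-1)).card := by
      apply Finset.card_bij' (fun (v : Fin (k^2)) (_ : v ∈ LegF t) => BPLB.dep k (v:ℕ) - 1)
        (fun j hj => (⟨1 + t*(k-1) + j, hlt j hj⟩ : Fin (k^2)))
      case hi =>
        intro a ha
        obtain ⟨ha0, haleg'⟩ := (hmemLegF t a).mp ha
        have hld := BPLB.legdep h2k ha0
        rw [Finset.mem_range]
        omega
      case hj =>
        intro j hj
        rw [Finset.mem_range] at hj
        refine (hmemLegF t _).mpr ⟨by simp only [Fin.val_mk]; omega, ?_⟩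
        show ((1 + t*(k-1) + j) - 1) / (k-1) = t
        have he : (1 + t*(k-1) + j) - 1 = t*(k-1) + j := by omega
        rw [he, (BPLB.div_mod_char (k-1) t j (by omega)).1]
      case left_inv =>
        intro a ha
        obtain ⟨ha0, haleg'⟩ := (hmemLegF t a).mp ha
        have hld := BPLB.legdep h2k ha0
        apply Fin.ext
        simp only [Fin.val_mk]
        rw [haleg'] at hld
        omega
      case right_inv =>
        intro j hj
        rw [Finset.mem_range] at hj
        have he : ((1 + t*(k-1) + j) - 1) = t*(k-1) + j := by omega
        show BPLB.dep k ((1 + t*(k-1) + j)) - 1 = j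
        unfold BPLB.dep
        rw [he, (BPLB.div_mod_char (k-1) t j (by omega)).2]
        omega
    rw [hcb, Finset.card_range]
  -- the sum over legs of root-part intersections
  have hzP : z ∈ P i₀ := hidx z
  have hbi : (Finset.range (k+1)).biUnion (fun t => P i₀ ∩ LegF t) = (P i₀).erase z := by
    ext x
    rw [Finset.mem_biUnion, Finset.mem_erase]
    constructor
    · rintro ⟨t, _, hx⟩
      rw [Finset.mem_inter, hmemLegF] at hx
      refine ⟨fun h => hx.2.1 (by rw [h]), hx.1⟩
    · rintro ⟨hxz, hxP⟩
      have hx0 : (x:ℕ) ≠ 0 := fun h => hxz (Fin.ext h)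
      have ht := BPLB.legOf_le h2k hx0 x.isLt
      exact ⟨BPLB.legOf k ↑x, Finset.mem_range.mpr (by omega),
        Finset.mem_inter.mpr ⟨hxP, (hmemLegF _ _).mpr ⟨hx0, rfl⟩⟩⟩
  have hsum : ∑ t ∈ Finset.range (k+1), (P i₀ ∩ LegF t).card = k - 1 := by
    rw [← Finset.card_biUnion, hbi, Finset.card_erase_of_mem hzP, hcard i₀]
    intro s hs t ht hst
    exact (hdisjLegF s t hst).mono Finset.inter_subset_right Finset.inter_subset_right
  -- full legs
  set S := (Finset.range (k+1)).filter (fun t => P i₀ ∩ LegF t = ∅) with hS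
  have h2S : 2 ≤ S.card := by
    by_contra hc
    push_neg at hc
    have h1 : ∀ t ∈ Finset.range (k+1) \ S, 1 ≤ (P i₀ ∩ LegF t).card := by
      intro t ht
      rw [Finset.mem_sdiff, hS, Finset.mem_filter] at ht
      have : P i₀ ∩ LegF t ≠ ∅ := fun h => ht.2 ⟨ht.1, h⟩
      exact Finset.card_pos.mpr (Finset.nonempty_iff_ne_empty.mpr this)
    have h2 : (Finset.range (k+1) \ S).card ≤
        ∑ t ∈ Finset.range (k+1) \ S, (P i₀ ∩ LegF t).card := by
      calc (Finset.range (k+1) \ S).card = ∑ _t ∈ Finset.range (k+1) \ S, 1 := by simp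
        _ ≤ _ := Finset.sum_le_sum h1
    have h3 : ∑ t ∈ Finset.range (k+1) \ S, (P i₀ ∩ LegF t).card ≤
        ∑ t ∈ Finset.range (k+1), (P i₀ ∩ LegF t).card :=
      Finset.sum_le_sum_of_subset (Finset.sdiff_subset)
    have h4 : (Finset.range (k+1) \ S).card = (k+1) - S.card := by
      rw [Finset.card_sdiff_of_subset (Finset.filter_subset _ _), Finset.card_range]
    omega
  -- exit lemma
  have EL : ∀ x : Fin (k^2), (x:ℕ) ≠ 0 → idx x ≠ i₀ →
      aleg (BPLB.legOf k ↑x) ∈ P (idx x) := by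
    intro x hx0 hix
    have ht : BPLB.legOf k ↑x ≤ k := BPLB.legOf_le h2k hx0 x.isLt
    have hzPi : z ∉ P (idx x) := fun hzi => hix (huniq z (idx x) hzi).symm
    have hy : ∃ y ∈ P (idx x), y ∉ LegF (BPLB.legOf k ↑x) := by
      by_contra hc
      push_neg at hc
      have hsub : P (idx x) ⊆ LegF (BPLB.legOf k ↑x) := fun y hy => hc y hy
      have := Finset.card_le_card hsub
      rw [hcard, card_LegF _ ht] at this
      omega
    obtain ⟨y, hyP, hyL⟩ := hy
    have hxL : x ∈ LegF (BPLB.legOf k ↑x) := (hmemLegF _ x).mpr ⟨hx0, rfl⟩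
    obtain ⟨p⟩ := (hH (idx x)).1.preconnected ⟨x, hidx x⟩ ⟨y, hyP⟩
    obtain ⟨A, B, hAB, hQA, hQB⟩ := BPLB.exists_boundary
      (fun a : {v // v ∈ P (idx x)} => a.1 ∈ LegF (BPLB.legOf k ↑x)) p hxL hyL
    have hd2 : (BPLB.spider k).dist A.1 B.1 ≤ 2 := by
      have := hcon (idx x) A B hAB
      omega
    have hA := (hmemLegF _ A.1).mp hQA
    have hB0 : (B.1 : ℕ) ≠ 0 := by
      intro h
      exact hzPi ((Fin.ext h : B.1 = z) ▸ B.2)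
    have hBleg : BPLB.legOf k ↑(B.1) ≠ BPLB.legOf k ↑x := by
      intro h
      exact hQB ((hmemLegF _ B.1).mpr ⟨hB0, h⟩)
    have hdist := BPLB.spider_dist3 hk A.1 B.1 hA.1 hB0
      (by rw [hA.2]; exact fun h => hBleg h.symm) hd2
    have hAeq : A.1 = aleg (BPLB.legOf k ↑x) := hrecon A.1 _ ht hA.1 hA.2 hdist.1
    exact hAeq ▸ A.2
  have L2 : ∀ x : Fin (k^2), (x:ℕ) ≠ 0 →
      x ∈ P i₀ ∨ aleg (BPLB.legOf k ↑x) ∈ P (idx x) := by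
    intro x hx0
    by_cases h : idx x = i₀
    · exact Or.inl (h ▸ hidx x)
    · exact Or.inr (EL x hx0 h)
  -- properties of full legs
  have master : ∀ t ∈ S, ∃ m : ℕ, m ≤ k ∧ m ≠ t ∧
      aleg m ∈ P (idx (aleg t)) ∧ LegF t ⊆ P (idx (aleg t)) ∧
      k - 2 ≤ (P i₀ ∩ LegF m).card := by
    intro t htS
    rw [hS, Finset.mem_filter, Finset.mem_range] at htS
    obtain ⟨htk', hempty⟩ := htS
    have htk : t ≤ k := by omega
    have hit : idx (aleg t) ≠ i₀ := by
      intro h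
      have : aleg t ∈ P i₀ ∩ LegF t :=
        Finset.mem_inter.mpr ⟨h ▸ hidx (aleg t), haleg_mem t htk⟩
      rw [hempty] at this
      exact absurd this (Finset.notMem_empty _)
    have hsubt : LegF t ⊆ P (idx (aleg t)) := by
      intro x hx
      obtain ⟨hx0, hxleg⟩ := (hmemLegF t x).mp hx
      rcases L2 x hx0 with h | h
      · exact absurd (Finset.mem_inter.mpr ⟨h, hx⟩)
          (by rw [hempty]; exact Finset.notMem_empty _)
      · rw [hxleg] at h
        have heq := huniq (aleg t) (idx x) h
        rw [heq]
        exact hidx x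
    -- the unique extra vertex
    have hcard1 : (P (idx (aleg t)) \ LegF t).card = 1 := by
      rw [Finset.card_sdiff_of_subset hsubt, hcard, card_LegF t htk]
      omega
    obtain ⟨xt, hxt⟩ := Finset.card_eq_one.mp hcard1
    have hxtmem : xt ∈ P (idx (aleg t)) \ LegF t := by
      rw [hxt]; exact Finset.mem_singleton_self xt
    rw [Finset.mem_sdiff] at hxtmem
    obtain ⟨hxtP, hxtL⟩ := hxtmem
    have hxt0 : (xt:ℕ) ≠ 0 := by
      intro h
      have hzz : xt = z := Fin.ext h
      have : z ∈ P i₀ ∩ P (idx (aleg t)) := Finset.mem_inter.mpr ⟨hzP, hzz ▸ hxtP⟩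
      exact Finset.disjoint_left.mp (hdisj _ _ (Ne.symm hit)) hzP (hzz ▸ hxtP)
    have hmk : BPLB.legOf k ↑xt ≤ k := BPLB.legOf_le h2k hxt0 xt.isLt
    have hmt : BPLB.legOf k ↑xt ≠ t := by
      intro h
      exact hxtL ((hmemLegF t xt).mpr ⟨hxt0, h⟩)
    -- xt = aleg m
    have hxtaleg : aleg (BPLB.legOf k ↑xt) = xt := by
      rcases L2 xt hxt0 with h | h
      · exfalso
        apply hit
        rw [← huniq xt _ hxtP]
        exact huniq xt i₀ h
      · rw [huniq xt _ hxtP] at h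
        have halegm : aleg (BPLB.legOf k ↑xt) ∈ P (idx (aleg t)) \ LegF t := by
          rw [Finset.mem_sdiff]
          refine ⟨h, ?_⟩
          intro hmem'
          have h1 : BPLB.legOf k ↑(aleg (BPLB.legOf k ↑xt)) = t := ((hmemLegF t _).mp hmem').2
          rw [(haleg_leg _ hmk).2] at h1
          exact hmt h1
        rw [hxt] at halegm
        exact Finset.mem_singleton.mp halegm
    refine ⟨BPLB.legOf k ↑xt, hmk, hmt, by rw [hxtaleg]; exact hxtP, hsubt, ?_⟩
    -- LegF m ⊆ insert xt (P i₀ ∩ LegF m)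
    have hsubm : LegF (BPLB.legOf k ↑xt) ⊆
        insert xt (P i₀ ∩ LegF (BPLB.legOf k ↑xt)) := by
      intro y hy
      obtain ⟨hy0, hyleg⟩ := (hmemLegF _ y).mp hy
      rcases L2 y hy0 with h | h
      · exact Finset.mem_insert.mpr (Or.inr (Finset.mem_inter.mpr ⟨h, hy⟩))
      · rw [hyleg, hxtaleg] at h
        have hidy : idx y = idx (aleg t) := by
          rw [← huniq xt _ h, huniq xt _ hxtP]
        have hyP : y ∈ P (idx (aleg t)) := hidy ▸ hidx y
        have hyNotT : y ∉ LegF t := by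
          intro hyT
          exact hmt (hyleg ▸ ((hmemLegF t y).mp hyT).2)
        have : y ∈ P (idx (aleg t)) \ LegF t := Finset.mem_sdiff.mpr ⟨hyP, hyNotT⟩
        rw [hxt] at this
        exact Finset.mem_insert.mpr (Or.inl (Finset.mem_singleton.mp this))
    have h1 := Finset.card_le_card hsubm
    have h2 := Finset.card_insert_le xt (P i₀ ∩ LegF (BPLB.legOf k ↑xt))
    rw [card_LegF _ hmk] at h1
    omega
  -- apply to two distinct full legs
  obtain ⟨t₁, ht₁, t₂, ht₂, hne12⟩ := Finset.one_lt_card.mp (by omega : 1 < S.card)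
  obtain ⟨m₁, hm₁k, hm₁t, hm₁mem, hsub₁, hcard₁⟩ := master t₁ ht₁
  obtain ⟨m₂, hm₂k, hm₂t, hm₂mem, hsub₂, hcard₂⟩ := master t₂ ht₂
  have ht₁k : t₁ ≤ k := by
    have := (Finset.mem_filter.mp (hS ▸ ht₁)).1; rw [Finset.mem_range] at this; omega
  have ht₂k : t₂ ≤ k := by
    have := (Finset.mem_filter.mp (hS ▸ ht₂)).1; rw [Finset.mem_range] at this; omega
  -- m₁ ≠ m₂
  have hmne : m₁ ≠ m₂ := by
    intro h
    subst h
    have hiteq : idx (aleg t₁) = idx (aleg t₂) := by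
      rw [← huniq (aleg m₁) _ hm₁mem, huniq (aleg m₁) _ hm₂mem]
    have hunion : LegF t₁ ∪ LegF t₂ ⊆ P (idx (aleg t₁)) :=
      Finset.union_subset hsub₁ (hiteq ▸ hsub₂)
    have hcu := Finset.card_le_card hunion
    rw [Finset.card_union_of_disjoint (hdisjLegF _ _ hne12), card_LegF _ ht₁k,
      card_LegF _ ht₂k, hcard] at hcu
    omega
  -- final contradiction
  have hfin : (P i₀ ∩ LegF m₁).card + (P i₀ ∩ LegF m₂).card ≤
      ∑ t ∈ Finset.range (k+1), (P i₀ ∩ LegF t).card := by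
    calc (P i₀ ∩ LegF m₁).card + (P i₀ ∩ LegF m₂).card
        = ∑ t ∈ ({m₁, m₂} : Finset ℕ), (P i₀ ∩ LegF t).card :=
          (Finset.sum_pair (f := fun t => (P i₀ ∩ LegF t).card) hmne).symm
      _ ≤ _ := by
          apply Finset.sum_le_sum_of_subset
          intro u hu
          rw [Finset.mem_insert, Finset.mem_singleton] at hu
          rw [Finset.mem_range]
          rcases hu with h | h <;> omega
  omega
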